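/- Let p ≥ 11 be a prime and let (x_1,...,x_n) be a sequence in Z_p with at least one nonzero term. Suppose x and x' are distinct elements of Z_p in the same coset of Q_p in U(p). Then there exist c_1,...,c_n, c, c' ∈ Q_p with c_1x_1+...+c_nx_n + c·x + c'·x' = 0 and c_1+...+c_n + c + c' ≠ 0. -/

import Mathlib

def Qp (p : ℕ) : Set (ZMod p) := {x | ∃ u : (ZMod p)ˣ, (u : ZMod p) ^ 2 = x}

def Np (p : ℕ) : Set (ZMod p) := {x | IsUnit x ∧ x ∉ Qp p}

variable {p : ℕ} [Fact p.Prime]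

lemma mem_Qp_iff_char (a : ZMod p) : a ∈ Qp p ↔ quadraticChar (ZMod p) a = 1 := by
  constructor
  · rintro ⟨u, rfl⟩
    exact quadraticChar_sq_one' (Units.ne_zero u)
  · intro h
    have ha : a ≠ 0 := fun h0 => by simp [h0, quadraticChar_zero] at h
    obtain ⟨r, hr⟩ := (quadraticChar_one_iff_isSquare ha).mp h
    have hr0 : r ≠ 0 := fun h0 => ha (by simp [hr, h0])
    exact ⟨Units.mk0 r hr0, by simp [sq, hr]⟩

lemma mem_Np_iff_char (a : ZMod p) : a ∈ Np p ↔ quadraticChar (ZMod p) a = -1 := by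
  constructor
  · rintro ⟨hu, hnq⟩
    have ha : a ≠ 0 := hu.ne_zero
    rcases quadraticChar_dichotomy (F := ZMod p) ha with h | h
    · exact absurd ((mem_Qp_iff_char a).mpr h) hnq
    · exact h
  · intro h
    have ha : a ≠ 0 := fun h0 => by simp [h0, quadraticChar_zero] at h
    refine ⟨isUnit_iff_ne_zero.mpr ha, fun hq => ?_⟩
    rw [mem_Qp_iff_char] at hq
    omega

lemma char_inv (a : ZMod p) : quadraticChar (ZMod p) a⁻¹ = quadraticChar (ZMod p) a := by
  rcases eq_or_ne a 0 with rfl | ha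
  · simp
  · have h1 : quadraticChar (ZMod p) a * quadraticChar (ZMod p) a⁻¹ = 1 := by
      rw [← map_mul, mul_inv_cancel₀ ha, map_one]
    have h2 : quadraticChar (ZMod p) a * quadraticChar (ZMod p) a = 1 := by
      have := quadraticChar_sq_one (F := ZMod p) ha
      rwa [sq] at this
    have h0 : quadraticChar (ZMod p) a ≠ 0 := by
      rw [Ne, quadraticChar_eq_zero_iff]; exact ha
    exact mul_left_cancel₀ h0 (h1.trans h2.symm)

lemma sum_char_mul (hp2 : p ≠ 2) (m : ZMod p) (hm : m ≠ 0) :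
    ∑ a : ZMod p, quadraticChar (ZMod p) a * quadraticChar (ZMod p) (m - a)
      = - quadraticChar (ZMod p) (-1) := by
  classical
  set χ := quadraticChar (ZMod p) with hχ
  have hchar : ringChar (ZMod p) ≠ 2 := by
    rw [ZMod.ringChar_zmod_n]; exact hp2
  have hstep : ∀ a : ZMod p, a ≠ 0 → χ a * χ (m - a) = χ (m * a⁻¹ - 1) := by
    intro a ha
    have : m * a⁻¹ - 1 = (m - a) * a⁻¹ := by field_simp
    rw [this, map_mul, char_inv, mul_comm]
  have h0 : χ 0 * χ (m - 0) = 0 := by simp [hχ]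
  rw [← Finset.sum_erase (f := fun a : ZMod p => χ a * χ (m - a)) Finset.univ h0]
  rw [Finset.sum_congr rfl (fun a ha => hstep a (Finset.ne_of_mem_erase ha))]
  rw [Finset.sum_nbij' (i := fun a => m * a⁻¹ - 1) (j := fun s => m * (s + 1)⁻¹)
    (t := Finset.univ.erase (-1)) (g := fun s => χ s)]
  · rw [Finset.sum_erase_eq_sub (Finset.mem_univ (-1)), quadraticChar_sum_zero hchar,
      zero_sub]
  · intro a ha
    have ha0 : a ≠ 0 := Finset.ne_of_mem_erase ha
    refine Finset.mem_erase.mpr ⟨?_, Finset.mem_univ _⟩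
    intro h
    have : m * a⁻¹ = 0 := by linear_combination h
    simp [ha0, hm] at this
  · intro s hs
    have hs1 : s ≠ -1 := Finset.ne_of_mem_erase hs
    refine Finset.mem_erase.mpr ⟨?_, Finset.mem_univ _⟩
    have h1 : s + 1 ≠ 0 := fun h => hs1 (by linear_combination h)
    simp [hm, h1]
  · intro a ha
    have ha0 : a ≠ 0 := Finset.ne_of_mem_erase ha
    field_simp
    rw [sub_add_cancel, div_self hm]
  · intro s hs
    have hs1 : s ≠ -1 := Finset.ne_of_mem_erase hs
    have h1 : s + 1 ≠ 0 := fun h => hs1 (by linear_combination h)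
    field_simp
    ring
  · intro a ha; rfl

lemma two_reps (hp : 11 ≤ p) (m : ZMod p) (hm : m ≠ 0) :
    ∃ a b : ZMod p, a ∈ Qp p ∧ b ∈ Qp p ∧ (m - a) ∈ Qp p ∧ (m - b) ∈ Qp p ∧ a ≠ b := by
  classical
  set χ := quadraticChar (ZMod p) with hχ
  have hp2 : p ≠ 2 := by omega
  have hchar : ringChar (ZMod p) ≠ 2 := by rw [ZMod.ringChar_zmod_n]; exact hp2
  have hv : ∀ b : ZMod p, χ b = 0 ∨ χ b = 1 ∨ χ b = -1 := by
    intro b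
    rcases eq_or_ne b 0 with rfl | hb
    · left; simp [hχ]
    · right; exact quadraticChar_dichotomy hb
  set T : Finset (ZMod p) := Finset.univ.filter (fun a => χ a = 1 ∧ χ (m - a) = 1) with hT
  set f : ZMod p → ℤ := fun a => (1 + χ a) * (1 + χ (m - a)) with hf
  have hsum : ∑ a : ZMod p, f a = (p : ℤ) - χ (-1) := by
    have e1 : ∑ a : ZMod p, χ a = 0 := quadraticChar_sum_zero hchar
    have e2 : ∑ a : ZMod p, χ (m - a) = 0 :=
      (Fintype.sum_equiv (Equiv.subLeft m) (fun a => χ (m - a)) (fun a => χ a)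
        (fun a => rfl)).trans (quadraticChar_sum_zero hchar)
    have e3 := sum_char_mul hp2 m hm
    have e4 : ∑ _a : ZMod p, (1:ℤ) = (p:ℤ) := by
      simp [Finset.card_univ, ZMod.card]
    calc ∑ a : ZMod p, f a
        = ∑ a : ZMod p, (1 + χ a + χ (m-a) + χ a * χ (m-a)) := by
          apply Finset.sum_congr rfl; intro a _; simp only [hf]; ring
      _ = (p:ℤ) - χ (-1) := by
          rw [Finset.sum_add_distrib, Finset.sum_add_distrib, Finset.sum_add_distrib,
            e1, e2, e3, e4]; ring
  have h0T : (0:ZMod p) ∉ T := by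
    simp only [hT, Finset.mem_filter]
    rintro ⟨-, h1, -⟩
    simp [hχ] at h1
  have hmT : m ∉ T := by
    simp only [hT, Finset.mem_filter]
    rintro ⟨-, -, h2⟩
    simp [hχ] at h2
  have hzero : ∀ a ∈ Finset.univ, a ∉ T ∪ ({0, m} : Finset (ZMod p)) → f a = 0 := by
    intro a _ ha
    simp only [Finset.mem_union, Finset.mem_insert, Finset.mem_singleton, not_or] at ha
    obtain ⟨haT, ha0, ham⟩ := ha
    have hma : m - a ≠ 0 := fun h => ham (by linear_combination -h)
    have h1 := quadraticChar_dichotomy (F := ZMod p) ha0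
    have h2 := quadraticChar_dichotomy (F := ZMod p) hma
    have : ¬(χ a = 1 ∧ χ (m - a) = 1) := by
      intro h; exact haT (by simp [hT, h.1, h.2])
    rw [← hχ] at h1 h2
    simp only [hf]
    rcases h1 with h1 | h1
    · rcases h2 with h2 | h2
      · exact absurd ⟨h1, h2⟩ this
      · rw [h2]; ring
    · rw [h1]; ring
  have hdisj : Disjoint T ({0, m} : Finset (ZMod p)) := by
    rw [Finset.disjoint_right]
    intro a ha
    simp only [Finset.mem_insert, Finset.mem_singleton] at ha
    rcases ha with rfl | rfl
    · exact h0T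
    · exact hmT
  have hTsum : ∑ a ∈ T, f a = 4 * T.card := by
    rw [Finset.sum_congr rfl (g := fun _ => (4:ℤ)) ?_, Finset.sum_const, nsmul_eq_mul,
      mul_comm]
    intro a ha
    simp only [hT, Finset.mem_filter] at ha
    simp [hf, ha.2.1, ha.2.2]
  have hsplit : ∑ a : ZMod p, f a = 4 * T.card + (f 0 + f m) := by
    rw [← Finset.sum_subset (Finset.subset_univ (T ∪ ({0, m} : Finset (ZMod p)))) hzero,
      Finset.sum_union hdisj, hTsum, Finset.sum_pair (Ne.symm hm)]
  have hf0 : f 0 ≤ 2 := by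
    have : f 0 = 1 + χ m := by simp [hf, hχ]
    rcases hv m with h | h | h <;> omega
  have hfm : f m ≤ 2 := by
    have : f m = 1 + χ m := by
      simp only [hf]
      rw [sub_self]
      have : χ 0 = 0 := by simp [hχ]
      rw [this]; ring
    rcases hv m with h | h | h <;> omega
  have hneg1 : χ (-1) ≤ 1 := by rcases hv (-1) with h | h | h <;> omega
  have hpz : (11:ℤ) ≤ (p:ℤ) := by exact_mod_cast hp
  have hcard : 1 < T.card := by
    have : (p:ℤ) - χ (-1) ≤ 4 * T.card + 4 := by rw [← hsum, hsplit]; omega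
    have h6 : (6:ℤ) ≤ 4 * T.card := by omega
    by_contra hc
    push_neg at hc
    interval_cases h : T.card <;> omega
  obtain ⟨a, haT, b, hbT, hab⟩ := Finset.one_lt_card.mp hcard
  simp only [hT, Finset.mem_filter] at haT hbT
  exact ⟨a, b, (mem_Qp_iff_char a).mpr haT.2.1, (mem_Qp_iff_char b).mpr hbT.2.1,
    (mem_Qp_iff_char _).mpr haT.2.2, (mem_Qp_iff_char _).mpr hbT.2.2, hab⟩

lemma natCast_ne_zero_of_lt {k : ℕ} (hk : 0 < k) (hkp : k < p) : (k : ZMod p) ≠ 0 := by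
  intro h
  have := (ZMod.natCast_eq_zero_iff k p).mp h
  have := Nat.le_of_dvd hk this
  omega

theorem stmt_9 (p : ℕ) [Fact p.Prime] (hp : 11 ≤ p) (n : ℕ) (x : Fin n → ZMod p)
    (hx : ∃ i, x i ≠ 0) (y y' : ZMod p) (hne : y ≠ y')
    (hcoset : (y ∈ Qp p ∧ y' ∈ Qp p) ∨ (y ∈ Np p ∧ y' ∈ Np p)) :
    ∃ c : Fin n → ZMod p, ∃ d ∈ Qp p, ∃ d' ∈ Qp p,
      (∀ i, c i ∈ Qp p) ∧
      (∑ i, c i * x i) + d * y + d' * y' = 0 ∧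
      (∑ i, c i) + d + d' ≠ 0 := by
  classical
  obtain ⟨i0, hi0⟩ := hx
  set χ := quadraticChar (ZMod p) with hχ
  have hp2 : p ≠ 2 := by omega
  -- basic facts about y, y'
  have hyy' : χ y * χ y' = 1 := by
    rcases hcoset with ⟨h1, h2⟩ | ⟨h1, h2⟩
    · rw [mem_Qp_iff_char] at h1 h2; rw [← hχ] at h1 h2; rw [h1, h2]; ring
    · rw [mem_Np_iff_char] at h1 h2; rw [← hχ] at h1 h2; rw [h1, h2]; ring
  have hy0 : y ≠ 0 := by
    intro h; rw [h] at hyy'; simp [hχ] at hyy'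
  have hy'0 : y' ≠ 0 := by
    intro h; rw [h] at hyy'; simp [hχ] at hyy'
  set q := y * y'⁻¹ with hq
  have hq0 : q ≠ 0 := mul_ne_zero hy0 (inv_ne_zero hy'0)
  have hq1 : χ q = 1 := by
    rw [hq, map_mul]
    have : χ y'⁻¹ = χ y' := char_inv y'
    rw [this]; exact hyy'
  have hqne1 : q ≠ 1 := by
    intro h
    exact hne ((mul_inv_eq_one₀ hy'0).mp h)
  -- choose c0
  set A := ∑ i ∈ Finset.univ.erase i0, x i with hA
  obtain ⟨c0, hc0Q, hS⟩ : ∃ c0 : ZMod p, χ c0 = 1 ∧ c0 * x i0 + A ≠ 0 := by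
    by_cases h : x i0 + A = 0
    · refine ⟨4, ?_, ?_⟩
      · have h2 : (2 : ZMod p) ≠ 0 := by
          have := natCast_ne_zero_of_lt (p := p) (k := 2) (by norm_num) (by omega)
          simpa using this
        have h4 : (4 : ZMod p) = (2:ZMod p)^2 := by norm_num
        rw [hχ, h4]; exact quadraticChar_sq_one' h2
      · intro hc
        have h3 : (3 : ZMod p) ≠ 0 := by
          have := natCast_ne_zero_of_lt (p := p) (k := 3) (by norm_num) (by omega)
          simpa using this
        have h30 : (3 : ZMod p) * x i0 = 0 := by linear_combination hc - h
        rcases mul_eq_zero.mp h30 with h' | h'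
        · exact h3 h'
        · exact hi0 h'
    · exact ⟨1, by rw [hχ, map_one], by simpa using h⟩
  set S := c0 * x i0 + A with hSdef
  set m := (-S) * y'⁻¹ with hmdef
  have hm0 : m ≠ 0 := mul_ne_zero (neg_ne_zero.mpr hS) (inv_ne_zero hy'0)
  obtain ⟨a, b, haQ, hbQ, hmaQ, hmbQ, hab⟩ := two_reps hp m hm0
  -- the coefficient function
  set c : Fin n → ZMod p := fun i => if i = i0 then c0 else 1 with hc
  have hcsum : ∑ i, c i * x i = S := by
    rw [← Finset.sum_erase_add _ _ (Finset.mem_univ i0)]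
    have h1 : ∑ i ∈ Finset.univ.erase i0, c i * x i = A := by
      rw [hA]
      refine Finset.sum_congr rfl (fun i hi => ?_)
      rw [hc]; simp only [if_neg (Finset.ne_of_mem_erase hi), one_mul]
    have hci0 : c i0 = c0 := if_pos rfl
    rw [h1, hci0, hSdef]; ring
  have hcQ : ∀ i, c i ∈ Qp p := by
    intro i
    rw [mem_Qp_iff_char, ← hχ, hc]
    by_cases h : i = i0
    · simp only [if_pos h]; exact hc0Q
    · simp only [if_neg h]; rw [hχ, map_one]
  have hqy : q⁻¹ * y = y' := by
    rw [hq]; field_simp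
  -- key: for any α, the linear combination vanishes
  have keyEq : ∀ α : ZMod p, S + (α * q⁻¹) * y + (m - α) * y' = 0 := by
    intro α
    have : S + (α * q⁻¹) * y + (m - α) * y' = S + α * (q⁻¹ * y) + (m - α) * y' := by ring
    rw [this, hqy, hmdef]
    field_simp
    ring
  have hdQ : ∀ α : ZMod p, α ∈ Qp p → α * q⁻¹ ∈ Qp p := by
    intro α hα
    rw [mem_Qp_iff_char, ← hχ] at hα ⊢
    rw [map_mul, char_inv, hα, hq1, one_mul]
  set B := ∑ i, c i with hB
  have hgne : B + a * q⁻¹ + (m - a) ≠ B + b * q⁻¹ + (m - b) := by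
    intro h
    have hmul : (a - b) * (q⁻¹ - 1) = 0 := by linear_combination h
    rcases mul_eq_zero.mp hmul with h' | h'
    · exact hab (by linear_combination h')
    · have : q⁻¹ = 1 := by linear_combination h'
      exact hqne1 (inv_eq_one.mp this)
  have main : ∀ α : ZMod p, α ∈ Qp p → (m - α) ∈ Qp p →
      (B + α * q⁻¹ + (m - α)) ≠ 0 →
      ∃ c : Fin n → ZMod p, ∃ d ∈ Qp p, ∃ d' ∈ Qp p,
        (∀ i, c i ∈ Qp p) ∧
        (∑ i, c i * x i) + d * y + d' * y' = 0 ∧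
        (∑ i, c i) + d + d' ≠ 0 := by
    intro α hα hmα hsum
    refine ⟨c, α * q⁻¹, hdQ α hα, m - α, hmα, hcQ, ?_, ?_⟩
    · rw [hcsum]; exact keyEq α
    · rw [← hB]
      intro h
      exact hsum (by linear_combination h)
  by_cases hga : B + a * q⁻¹ + (m - a) = 0
  · exact main b hbQ hmbQ (fun h => hgne (by rw [hga, h]))
  · exact main a haQ hmaQ hga
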